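/- Let d ≥ 1, L > 0, G ≥ 0, η > 0. Let P : ℝ^d → ℝ be L-weakly convex (i.e. γ ↦ P(γ) + (L/2)‖γ‖₂² is convex) with Moreau envelope P_{1/2L}(θ) = inf_γ (P(γ) + L‖γ − θ‖₂²). Fix θ ∈ ℝ^d and suppose the infimum defining P_{1/2L}(θ) is attained at θ̂. Let h : ℝ^d → ℝ satisfy h ≤ P pointwise, and let v ∈ ℝ^d with ‖v‖₂ ≤ G be a weak subgradient of h at θ, i.e. h(γ) ≥ h(θ) + ⟨v, γ − θ⟩ − (L/2)‖γ − θ‖₂² for all γ. Then the gradient step θ⁺ := θ − η v satisfies P_{1/2L}(θ⁺) ≤ P_{1/2L}(θ) + 2ηL(P(θ) − h(θ)) − ηL²‖θ − θ̂‖₂² + η²L G². -/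
import Mathlib


open scoped RealInnerProductSpace

private lemma midpoint_norm_sq {E : Type*} [NormedAddCommGroup E] [InnerProductSpace ℝ E]
    (x y : E) :
    ‖(1/2:ℝ) • x + (1/2:ℝ) • y‖ ^ 2
      = (1/2) * ‖x‖ ^ 2 + (1/2) * ‖y‖ ^ 2 - (1/4) * ‖x - y‖ ^ 2 := by
  simp only [← real_inner_self_eq_norm_sq, inner_add_left, inner_add_right,
    inner_sub_left, inner_sub_right, real_inner_smul_left, real_inner_smul_right,
    real_inner_comm x y]
  ring

private lemma shift_norm_sq {E : Type*} [NormedAddCommGroup E] [InnerProductSpace ℝ E]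
    (a v : E) (η : ℝ) :
    ‖a + η • v‖ ^ 2 = ‖a‖ ^ 2 + 2 * η * ⟪v, a⟫ + η ^ 2 * ‖v‖ ^ 2 := by
  simp only [← real_inner_self_eq_norm_sq, inner_add_left, inner_add_right,
    real_inner_smul_left, real_inner_smul_right, real_inner_comm v a]
  ring


set_option maxHeartbeats 1000000 in
/-- Deterministic one-step descent inequality for the Moreau envelope
`P_{1/2L}(θ) = inf_γ (P(γ) + L‖γ − θ‖²)` along a gradient step `θ⁺ = θ − ηv`,
where `v` (with `‖v‖ ≤ G`) is a weak subgradient of a minorant `h ≤ P` at `θ`: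
`P_{1/2L}(θ⁺) ≤ P_{1/2L}(θ) + 2ηL(P(θ) − h(θ)) − ηL²‖θ − θ̂‖² + η²LG²`. -/
theorem moreau_envelope_one_step_descent
    (d : ℕ) (hd : 1 ≤ d) (L G η : ℝ) (hL : 0 < L) (hG : 0 ≤ G) (hη : 0 < η)
    (P : EuclideanSpace ℝ (Fin d) → ℝ)
    (hwc : ConvexOn ℝ Set.univ (fun γ => P γ + (L / 2) * ‖γ‖ ^ 2))
    (θ θhat : EuclideanSpace ℝ (Fin d))
    (hmin : ∀ γ : EuclideanSpace ℝ (Fin d),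
      P θhat + L * ‖θhat - θ‖ ^ 2 ≤ P γ + L * ‖γ - θ‖ ^ 2)
    (h : EuclideanSpace ℝ (Fin d) → ℝ) (hle : ∀ γ, h γ ≤ P γ)
    (v : EuclideanSpace ℝ (Fin d)) (hv : ‖v‖ ≤ G)
    (hsub : ∀ γ : EuclideanSpace ℝ (Fin d),
      h γ ≥ h θ + ⟪v, γ - θ⟫ - (L / 2) * ‖γ - θ‖ ^ 2) :
    (⨅ γ : EuclideanSpace ℝ (Fin d), (P γ + L * ‖γ - (θ - η • v)‖ ^ 2))
      ≤ (⨅ γ : EuclideanSpace ℝ (Fin d), (P γ + L * ‖γ - θ‖ ^ 2))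
        + 2 * η * L * (P θ - h θ) - η * L ^ 2 * ‖θ - θhat‖ ^ 2
        + η ^ 2 * L * G ^ 2 := by
  -- Quadratic growth from the minimizer (strong convexity of γ ↦ P γ + L‖γ-θ‖²)
  have keyA : ∀ γ : EuclideanSpace ℝ (Fin d),
      P θhat + L * ‖θhat - θ‖ ^ 2 + (L/4) * ‖γ - θhat‖ ^ 2
        ≤ P γ + L * ‖γ - θ‖ ^ 2 := by
    intro γ
    have hconv := hwc.2 (Set.mem_univ γ) (Set.mem_univ θhat)
      (by norm_num : (0:ℝ) ≤ 1/2) (by norm_num : (0:ℝ) ≤ 1/2) (by norm_num)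
    simp only [smul_eq_mul] at hconv
    have hm := hmin ((1/2:ℝ) • γ + (1/2:ℝ) • θhat)
    have e1 := midpoint_norm_sq γ θhat
    have e2 : ‖((1/2:ℝ) • γ + (1/2:ℝ) • θhat) - θ‖ ^ 2
        = (1/2) * ‖γ - θ‖ ^ 2 + (1/2) * ‖θhat - θ‖ ^ 2 - (1/4) * ‖γ - θhat‖ ^ 2 := by
      have : ((1/2:ℝ) • γ + (1/2:ℝ) • θhat) - θ
          = (1/2:ℝ) • (γ - θ) + (1/2:ℝ) • (θhat - θ) := by module
      rw [this, midpoint_norm_sq]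
      have : (γ - θ) - (θhat - θ) = γ - θhat := by abel
      rw [this]
    rw [e2] at hm
    rw [e1] at hconv
    linarith [hm, hconv]
  -- bounded below
  have hbdd : BddBelow (Set.range fun γ : EuclideanSpace ℝ (Fin d) =>
      P γ + L * ‖γ - (θ - η • v)‖ ^ 2) := by
    refine ⟨P θhat + L * ‖θhat - θ‖ ^ 2 - 4 * η ^ 2 * L * ‖v‖ ^ 2
      - 2 * η * L * ‖θhat - θ‖ * ‖v‖, ?_⟩
    rintro _ ⟨γ, rfl⟩
    have hA := keyA γ
    have e3 : ‖γ - (θ - η • v)‖ ^ 2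
        = ‖γ - θ‖ ^ 2 + 2 * η * ⟪v, γ - θ⟫ + η ^ 2 * ‖v‖ ^ 2 := by
      have : γ - (θ - η • v) = (γ - θ) + η • v := by module
      rw [this, shift_norm_sq]
    have hsplit : ⟪v, γ - θ⟫ = ⟪v, γ - θhat⟫ + ⟪v, θhat - θ⟫ := by
      rw [← inner_add_right]
      congr 1
      abel
    have hcs1 : -(‖v‖ * ‖γ - θhat‖) ≤ ⟪v, γ - θhat⟫ :=
      neg_le_of_abs_le (abs_real_inner_le_norm v (γ - θhat))
    have hcs2 : -(‖v‖ * ‖θhat - θ‖) ≤ ⟪v, θhat - θ⟫ :=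
      neg_le_of_abs_le (abs_real_inner_le_norm v (θhat - θ))
    have hi : -(‖v‖ * ‖γ - θhat‖) - ‖v‖ * ‖θhat - θ‖ ≤ ⟪v, γ - θ⟫ := by
      rw [hsplit]; linarith
    have hib := mul_le_mul_of_nonneg_left hi (by positivity : (0:ℝ) ≤ 2 * η * L)
    show P θhat + L * ‖θhat - θ‖ ^ 2 - 4 * η ^ 2 * L * ‖v‖ ^ 2
      - 2 * η * L * ‖θhat - θ‖ * ‖v‖ ≤ P γ + L * ‖γ - (θ - η • v)‖ ^ 2
    rw [e3]
    have hq : (0:ℝ) ≤ L/4 * (‖γ - θhat‖ - 4 * η * ‖v‖)^2 + η^2 * L * ‖v‖^2 := by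
      positivity
    nlinarith [hib, hA, hq]
  have h1 : (⨅ γ : EuclideanSpace ℝ (Fin d), (P γ + L * ‖γ - (θ - η • v)‖ ^ 2))
      ≤ P θhat + L * ‖θhat - (θ - η • v)‖ ^ 2 := ciInf_le hbdd θhat
  have h2 : P θhat + L * ‖θhat - θ‖ ^ 2
      ≤ (⨅ γ : EuclideanSpace ℝ (Fin d), (P γ + L * ‖γ - θ‖ ^ 2)) :=
    le_ciInf hmin
  have h3 := hsub θhat
  have h4 := hle θhat
  have h5 := keyA θ
  rw [sub_self, norm_zero] at h5
  have e4 : ‖θhat - (θ - η • v)‖ ^ 2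
      = ‖θhat - θ‖ ^ 2 + 2 * η * ⟪v, θhat - θ⟫ + η ^ 2 * ‖v‖ ^ 2 := by
    have : θhat - (θ - η • v) = (θhat - θ) + η • v := by module
    rw [this, shift_norm_sq]
  have hnr : ‖θ - θhat‖ = ‖θhat - θ‖ := norm_sub_rev _ _
  -- from h3, h4, h5 : ⟪v, θhat - θ⟫ ≤ P θ - h θ - (3L/4)‖θhat - θ‖²
  have hinner : ⟪v, θhat - θ⟫ ≤ P θ - h θ - (3*L/4) * ‖θhat - θ‖ ^ 2 := by
    rw [hnr] at h5
    nlinarith [h3, h4, h5]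
  have hv2 : ‖v‖ ^ 2 ≤ G ^ 2 := by nlinarith [norm_nonneg v]
  rw [e4] at h1
  rw [hnr]
  nlinarith [h1, h2, mul_le_mul_of_nonneg_left hinner
      (by positivity : (0:ℝ) ≤ 2 * η * L),
    mul_le_mul_of_nonneg_left hv2 (by positivity : (0:ℝ) ≤ η ^ 2 * L),
    mul_nonneg (mul_nonneg hη.le (mul_pos hL hL).le) (sq_nonneg ‖θhat - θ‖)]
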